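/- If G is a positive C^2 function on [0,∞) satisfying -h^2 G'' + (V-E)G = 0 with V - E ≥ δη/2 on [x_E + η/2, ∞), and ∫₀^∞ G² = 1, then ∫_{x_E+η}^∞ G(z)² dz ≤ (4/(ηω)) e^{-ωη/4}, where ω = √(δη)/h. -/

import Mathlib

open Set MeasureTheory Filter Topology

/-- Improper integral of a decaying exponential. -/
lemma exp_integral_Ioi_aux (k b : ℝ) (hk : 0 < k) :
    ∫ y in Ioi b, Real.exp (-(k * (y - b))) = 1 / k := by
  have hfun : (fun y : ℝ => Real.exp (-(k * (y - b))))
      = fun y : ℝ => Real.exp (k * b) * Real.exp (-k * y) := by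
    funext y; rw [← Real.exp_add]; ring_nf
  have hint : IntegrableOn (fun y : ℝ => Real.exp (-(k * (y - b)))) (Ioi b) := by
    rw [hfun]
    exact (exp_neg_integrableOn_Ioi b hk).const_mul _
  have hderiv : ∀ y ∈ Ici b, HasDerivAt (fun y : ℝ => -Real.exp (-(k * (y - b))) / k)
      (Real.exp (-(k * (y - b)))) y := by
    intro y _
    have h1 : HasDerivAt (fun y : ℝ => -(k * (y - b))) (-k) y := by
      have := (((hasDerivAt_id y).sub_const b).const_mul k).neg
      simp only [id, mul_one] at this
      exact this
    have h3 := (h1.exp.neg).div_const k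
    exact h3.congr_deriv (by field_simp)
  have h0 : Tendsto (fun y : ℝ => k * (y - b)) atTop atTop := by
    apply Tendsto.const_mul_atTop hk
    simpa [sub_eq_add_neg] using tendsto_atTop_add_const_right atTop (-b) (tendsto_id (α := ℝ))
  have htend : Tendsto (fun y : ℝ => -Real.exp (-(k * (y - b))) / k) atTop (𝓝 0) := by
    have h2 : Tendsto (fun y : ℝ => Real.exp (-(k * (y - b)))) atTop (𝓝 0) :=
      Real.tendsto_exp_neg_atTop_nhds_zero.comp h0
    simpa using (h2.neg).div_const k
  have := integral_Ioi_of_hasDerivAt_of_tendsto' hderiv hint htend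
  rw [this]
  simp
  ring

set_option maxHeartbeats 2000000 in
theorem stmt2 (h δ η xE E : ℝ) (hh : 0 < h) (hδ : 0 < δ) (hη : 0 < η) (hxE : 0 ≤ xE)
    (V G G' G'' : ℝ → ℝ)
    (hVlb : ∀ x ∈ Ici (xE + η / 2), δ * η / 2 ≤ V x - E)
    (hG1 : ∀ x ∈ Ici (xE + η / 2), HasDerivWithinAt G (G' x) (Ici (xE + η / 2)) x)
    (hG2 : ∀ x ∈ Ici (xE + η / 2), HasDerivWithinAt G' (G'' x) (Ici (xE + η / 2)) x)
    (hG''c : ContinuousOn G'' (Ici (xE + η / 2)))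
    (hGpos : ∀ x ∈ Ici (xE + η / 2), 0 < G x)
    (hODE : ∀ x ∈ Ici (xE + η / 2), -h ^ 2 * G'' x + (V x - E) * G x = 0)
    (hGint : IntegrableOn (fun x => (G x) ^ 2) (Ioi 0))
    (hnorm : ∫ x in Ioi (0 : ℝ), (G x) ^ 2 = 1) :
    ∫ z in Ioi (xE + η), (G z) ^ 2 ≤
      4 / (η * (Real.sqrt (δ * η) / h)) * Real.exp (-(Real.sqrt (δ * η) / h) * η / 4) := by
  have hδη : 0 < δ * η := mul_pos hδ hη
  set ω : ℝ := Real.sqrt (δ * η) / h with hω_def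
  have hω : 0 < ω := div_pos (Real.sqrt_pos.mpr hδη) hh
  clear_value ω
  set c : ℝ := ω / 2 with hc_def
  have hc : 0 < c := by rw [hc_def]; exact half_pos hω
  clear_value c
  set a : ℝ := xE + η / 2 with ha_def
  set b : ℝ := xE + η with hb_def
  clear_value a b
  have ha0 : 0 < a := by rw [ha_def]; linarith
  have hab : a < b := by rw [ha_def, hb_def]; linarith
  have hba : b - a = η / 2 := by rw [ha_def, hb_def]; ring
  -- lower bound for G''
  have hc2h2 : c ^ 2 * h ^ 2 = δ * η / 4 := by
    have hs : Real.sqrt (δ * η) ^ 2 = δ * η := Real.sq_sqrt hδη.le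
    rw [hc_def, hω_def, div_pow, div_pow, hs]
    field_simp
    ring
  have hG''lb : ∀ x ∈ Ici a, c ^ 2 * G x ≤ G'' x := by
    intro x hx
    have hode := hODE x hx
    have hv := hVlb x hx
    have hg := hGpos x hx
    have hh2 : (0:ℝ) < h ^ 2 := by positivity
    nlinarith [mul_le_mul_of_nonneg_right hv hg.le, mul_pos hδη hg]
  have hG''nn : ∀ x ∈ Ici a, 0 ≤ G'' x := fun x hx =>
    le_trans (mul_nonneg (sq_nonneg c) (hGpos x hx).le) (hG''lb x hx)
  -- continuity
  have hGcont : ContinuousOn G (Ici a) := fun x hx => (hG1 x hx).continuousWithinAt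
  have hG'cont : ContinuousOn G' (Ici a) := fun x hx => (hG2 x hx).continuousWithinAt
  -- G' is monotone on [a, ∞)
  have hG'mono : MonotoneOn G' (Ici a) := by
    apply monotoneOn_of_hasDerivWithinAt_nonneg (convex_Ici a) hG'cont
    · intro x hx
      rw [interior_Ici] at hx ⊢
      exact (hG2 x (Ioi_subset_Ici_self hx)).mono Ioi_subset_Ici_self
    · intro x hx
      rw [interior_Ici] at hx
      exact hG''nn x (Ioi_subset_Ici_self hx)
  -- integrability rules out G bounded below on a half line
  have hNI : ∀ X m : ℝ, 0 ≤ X → 0 < m → (∀ y ∈ Ici X, m ≤ G y) → False := by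
    intro X m hX hm hge
    set T : ℝ := X + 2 / m ^ 2 with hT_def
    have hTX : X < T := by
      have : (0:ℝ) < 2 / m ^ 2 := by positivity
      rw [hT_def]; linarith
    have hsub : Ioc X T ⊆ Ioi 0 := fun y hy => lt_of_le_of_lt hX hy.1
    have hint1 : IntegrableOn (fun x => G x ^ 2) (Ioc X T) := hGint.mono_set hsub
    have hconst : IntegrableOn (fun _ : ℝ => m ^ 2) (Ioc X T) :=
      integrableOn_const measure_Ioc_lt_top.ne
    have h1 : ∫ x in Ioc X T, (m ^ 2 : ℝ) ≤ ∫ x in Ioc X T, G x ^ 2 := by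
      apply setIntegral_mono_on hconst hint1 measurableSet_Ioc
      intro y hy
      exact pow_le_pow_left₀ hm.le (hge y (le_of_lt hy.1)) 2
    have h2 : ∫ x in Ioc X T, G x ^ 2 ≤ ∫ x in Ioi 0, G x ^ 2 := by
      apply setIntegral_mono_set hGint
      · filter_upwards with x using sq_nonneg (G x)
      · exact HasSubset.Subset.eventuallyLE hsub
    have h3 : ∫ x in Ioc X T, (m ^ 2 : ℝ) = (T - X) * m ^ 2 := by
      rw [setIntegral_const, Real.volume_real_Ioc_of_le hTX.le, smul_eq_mul]
    have hTX2 : T - X = 2 / m ^ 2 := by rw [hT_def]; ring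
    have h4 : (T - X) * m ^ 2 = 2 := by
      rw [hTX2]; field_simp
    have h5 := le_trans h1 h2
    rw [h3, h4, hnorm] at h5
    linarith
  -- G' ≤ 0 on [a, ∞)
  have hG'le : ∀ x ∈ Ici a, G' x ≤ 0 := by
    intro x hx
    by_contra hpos
    push_neg at hpos
    have hIx : Ici x ⊆ Ici a := Ici_subset_Ici.mpr hx
    have hGmonox : MonotoneOn G (Ici x) := by
      apply monotoneOn_of_hasDerivWithinAt_nonneg (convex_Ici x) (hGcont.mono hIx)
      · intro y hy
        rw [interior_Ici] at hy ⊢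
        exact (hG1 y (hIx (Ioi_subset_Ici_self hy))).mono (fun z hz => hIx (Ioi_subset_Ici_self hz))
      · intro y hy
        rw [interior_Ici] at hy
        exact le_trans hpos.le (hG'mono hx (hIx (Ioi_subset_Ici_self hy)) (le_of_lt hy))
    exact hNI x (G x) (le_trans ha0.le hx) (hGpos x hx)
      (fun y hy => hGmonox self_mem_Ici hy hy)
  -- the energy function W = G'^2 - c^2 G^2 is antitone
  have hWanti : AntitoneOn (fun x => G' x ^ 2 - c ^ 2 * G x ^ 2) (Ici a) := by
    apply antitoneOn_of_hasDerivWithinAt_nonpos (convex_Ici a)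
      (f' := fun x => 2 * G' x * G'' x - c ^ 2 * (2 * G x * G' x))
    · exact (hG'cont.pow 2).sub (continuousOn_const.mul (hGcont.pow 2))
    · intro x hx
      rw [interior_Ici] at hx ⊢
      have hg1 : HasDerivWithinAt G (G' x) (Ioi a) x :=
        (hG1 x (Ioi_subset_Ici_self hx)).mono Ioi_subset_Ici_self
      have hg2 : HasDerivWithinAt G' (G'' x) (Ioi a) x :=
        (hG2 x (Ioi_subset_Ici_self hx)).mono Ioi_subset_Ici_self
      have hd := (hg2.pow 2).sub ((hg1.pow 2).const_mul (c ^ 2))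
      exact hd.congr_deriv (by push_cast; ring)
    · intro x hx
      rw [interior_Ici] at hx
      have h1 := hG'le x (Ioi_subset_Ici_self hx)
      have h2 := hG''lb x (Ioi_subset_Ici_self hx)
      nlinarith [mul_nonneg (neg_nonneg.mpr h1) (sub_nonneg.mpr h2)]
  -- W is nonnegative
  have hWnn : ∀ x ∈ Ici a, 0 ≤ G' x ^ 2 - c ^ 2 * G x ^ 2 := by
    intro x hx
    by_contra hneg
    push_neg at hneg
    set m : ℝ := Real.sqrt (c ^ 2 * G x ^ 2 - G' x ^ 2) / c with hm_def
    have hm : 0 < m := div_pos (Real.sqrt_pos.mpr (by linarith)) hc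
    have hmc : m * c = Real.sqrt (c ^ 2 * G x ^ 2 - G' x ^ 2) := by
      rw [hm_def]; exact div_mul_cancel₀ _ hc.ne'
    have hcm : c ^ 2 * m ^ 2 = c ^ 2 * G x ^ 2 - G' x ^ 2 := by
      calc c ^ 2 * m ^ 2 = (m * c) ^ 2 := by ring
        _ = c ^ 2 * G x ^ 2 - G' x ^ 2 := by
            rw [hmc]
            exact Real.sq_sqrt (by linarith)
    have hex : ∃ y ∈ Ici x, G y < m := by
      by_contra hcon
      push_neg at hcon
      exact hNI x m (le_trans ha0.le hx) hm hcon
    obtain ⟨y, hy, hGy⟩ := hex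
    have hya : y ∈ Ici a := (Ici_subset_Ici.mpr hx) hy
    have hWyx : G' y ^ 2 - c ^ 2 * G y ^ 2 ≤ G' x ^ 2 - c ^ 2 * G x ^ 2 := hWanti hx hya hy
    have hGynn : 0 < G y := hGpos y hya
    have hGy2 : G y ^ 2 < m ^ 2 := by nlinarith
    nlinarith [sq_nonneg (G' y), mul_lt_mul_of_pos_left hGy2 (pow_pos hc 2)]
  -- differential inequality G' ≤ -c G
  have hdecay : ∀ x ∈ Ici a, G' x ≤ -(c * G x) := by
    intro x hx
    have h1 := hWnn x hx
    have h2 := hG'le x hx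
    have h3 : 0 < c * G x := mul_pos hc (hGpos x hx)
    by_contra hcon
    push_neg at hcon
    have hp1 : 0 < G' x + c * G x := by linarith
    have hp2 : 0 < c * G x - G' x := by linarith
    have h4 := mul_pos hp1 hp2
    have h5 : (G' x + c * G x) * (c * G x - G' x) = c ^ 2 * G x ^ 2 - G' x ^ 2 := by ring
    linarith
  -- u(x) = G(x) e^{c x} is antitone
  have hu : AntitoneOn (fun x => G x * Real.exp (c * x)) (Ici a) := by
    apply antitoneOn_of_hasDerivWithinAt_nonpos (convex_Ici a)
      (f' := fun x => G' x * Real.exp (c * x) + G x * (Real.exp (c * x) * c))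
    · exact hGcont.mul
        (Continuous.continuousOn (Real.continuous_exp.comp (continuous_const.mul continuous_id)))
    · intro x hx
      rw [interior_Ici] at hx ⊢
      have hg1 : HasDerivWithinAt G (G' x) (Ioi a) x :=
        (hG1 x (Ioi_subset_Ici_self hx)).mono Ioi_subset_Ici_self
      have hexp : HasDerivWithinAt (fun x : ℝ => Real.exp (c * x))
          (Real.exp (c * x) * c) (Ioi a) x := by
        have hcd : HasDerivAt (fun x : ℝ => c * x) c x := by
          simpa using (hasDerivAt_id x).const_mul c
        exact (hcd.exp).hasDerivWithinAt
      exact hg1.mul hexp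
    · intro x hx
      rw [interior_Ici] at hx
      have h1 := hdecay x (Ioi_subset_Ici_self hx)
      have h2 := Real.exp_pos (c * x)
      nlinarith
  -- pointwise exponential decay
  have hpt : ∀ x ∈ Ici a, ∀ y, x ≤ y → G y ≤ G x * Real.exp (-(c * (y - x))) := by
    intro x hx y hxy
    have hy : y ∈ Ici a := le_trans hx hxy
    have h1 : G y * Real.exp (c * y) ≤ G x * Real.exp (c * x) := hu hx hy hxy
    have h2 := mul_le_mul_of_nonneg_right h1 (Real.exp_pos (-(c * y))).le
    rw [mul_assoc, mul_assoc, ← Real.exp_add, ← Real.exp_add] at h2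
    simpa [show c * y + -(c * y) = 0 from by ring,
      show c * x + -(c * y) = -(c * (y - x)) from by ring, Real.exp_zero] using h2
  -- bound on G b ^ 2
  set mid : ℝ := a + η / 4 with hmid_def
  clear_value mid
  have hmida : a < mid := by rw [hmid_def]; linarith
  have hKle : ∀ x ∈ Ioc a mid, G b ^ 2 * Real.exp (ω * η / 4) ≤ G x ^ 2 := by
    intro x hx
    have hxa : x ∈ Ici a := hx.1.le
    have hxmid : x ≤ mid := hx.2
    have hxb : x ≤ b := by rw [hmid_def] at hxmid; linarith [hba]
    have h1 := hpt x hxa b hxb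
    have h2 : G b * Real.exp (c * (b - x)) ≤ G x := by
      have h2' := mul_le_mul_of_nonneg_right h1 (Real.exp_pos (c * (b - x))).le
      rw [mul_assoc, ← Real.exp_add] at h2'
      simpa [show -(c * (b - x)) + c * (b - x) = 0 from by ring, Real.exp_zero] using h2'
    have hbx : η / 4 ≤ b - x := by rw [hmid_def] at hxmid; linarith [hba]
    have h3 : Real.exp (c * (η / 4)) ≤ Real.exp (c * (b - x)) :=
      Real.exp_le_exp.mpr (mul_le_mul_of_nonneg_left hbx hc.le)
    have h4 : G b * Real.exp (c * (η / 4)) ≤ G x :=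
      le_trans (mul_le_mul_of_nonneg_left h3 (hGpos b hab.le).le) h2
    have hEE : Real.exp (ω * η / 4) = Real.exp (c * (η / 4)) * Real.exp (c * (η / 4)) := by
      rw [← Real.exp_add]
      congr 1
      rw [hc_def]; ring
    rw [hEE]
    nlinarith [mul_self_le_mul_self
      (mul_nonneg (hGpos b hab.le).le (Real.exp_pos _).le) h4]
  have hmidsub : Ioc a mid ⊆ Ioi 0 := fun y hy => lt_trans ha0 hy.1
  have hK1 : G b ^ 2 * Real.exp (ω * η / 4) * (η / 4) ≤ 1 := by
    have hint1 : IntegrableOn (fun x => G x ^ 2) (Ioc a mid) := hGint.mono_set hmidsub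
    have hconst : IntegrableOn (fun _ : ℝ => G b ^ 2 * Real.exp (ω * η / 4)) (Ioc a mid) :=
      integrableOn_const measure_Ioc_lt_top.ne
    have h1 : ∫ _ in Ioc a mid, (G b ^ 2 * Real.exp (ω * η / 4)) ≤ ∫ x in Ioc a mid, G x ^ 2 :=
      setIntegral_mono_on hconst hint1 measurableSet_Ioc hKle
    have h2 : ∫ x in Ioc a mid, G x ^ 2 ≤ ∫ x in Ioi 0, G x ^ 2 := by
      apply setIntegral_mono_set hGint
      · filter_upwards with x using sq_nonneg (G x)
      · exact HasSubset.Subset.eventuallyLE hmidsub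
    have h3 : ∫ _ in Ioc a mid, (G b ^ 2 * Real.exp (ω * η / 4))
        = (η / 4) * (G b ^ 2 * Real.exp (ω * η / 4)) := by
      rw [setIntegral_const, Real.volume_real_Ioc_of_le hmida.le, smul_eq_mul,
        show mid - a = η / 4 from by rw [hmid_def]; ring]
    rw [hnorm] at h2
    rw [h3] at h1
    linarith
  -- tail integral bound
  have hbpos : 0 < b := lt_trans ha0 hab
  have htail : ∫ z in Ioi b, G z ^ 2 ≤ G b ^ 2 * (1 / (2 * c)) := by
    have hmaj : ∀ z ∈ Ioi b, G z ^ 2 ≤ G b ^ 2 * Real.exp (-(2 * c * (z - b))) := by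
      intro z hz
      have hza : z ∈ Ici a := le_trans hab.le (le_of_lt hz)
      have h1 := hpt b hab.le z (le_of_lt hz)
      have hEE : Real.exp (-(2 * c * (z - b)))
          = Real.exp (-(c * (z - b))) * Real.exp (-(c * (z - b))) := by
        rw [← Real.exp_add]; congr 1; ring
      rw [hEE]
      nlinarith [mul_self_le_mul_self (hGpos z hza).le h1]
    have hfun : (fun z : ℝ => Real.exp (-(2 * c * (z - b))))
        = fun z : ℝ => Real.exp (2 * c * b) * Real.exp (-(2 * c) * z) := by
      funext z; rw [← Real.exp_add]; ring_nf
    have hIexp : IntegrableOn (fun z : ℝ => Real.exp (-(2 * c * (z - b)))) (Ioi b) := by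
      rw [hfun]
      exact (exp_neg_integrableOn_Ioi b (by positivity)).const_mul _
    have hint1 : IntegrableOn (fun z => G z ^ 2) (Ioi b) :=
      hGint.mono_set (fun z hz => lt_trans hbpos hz)
    have h1 : ∫ z in Ioi b, G z ^ 2 ≤ ∫ z in Ioi b, G b ^ 2 * Real.exp (-(2 * c * (z - b))) :=
      setIntegral_mono_on hint1 (hIexp.const_mul _) measurableSet_Ioi hmaj
    have h2 : ∫ z in Ioi b, G b ^ 2 * Real.exp (-(2 * c * (z - b)))
        = G b ^ 2 * (1 / (2 * c)) := by
      rw [integral_const_mul, exp_integral_Ioi_aux (2 * c) b (by positivity)]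
    linarith
  -- conclusion
  have hE : (0:ℝ) < Real.exp (ω * η / 4) := Real.exp_pos _
  have hGb2 : G b ^ 2 ≤ 4 / η * (Real.exp (ω * η / 4))⁻¹ := by
    have heq : (4:ℝ) / η * (Real.exp (ω * η / 4))⁻¹ = 4 / (η * Real.exp (ω * η / 4)) := by
      field_simp
    rw [heq, le_div_iff₀ (by positivity)]
    nlinarith [hK1]
  have hexpω : Real.exp (-ω * η / 4) = (Real.exp (ω * η / 4))⁻¹ := by
    rw [← Real.exp_neg]
    congr 1
    ring
  calc ∫ z in Ioi b, G z ^ 2 ≤ G b ^ 2 * (1 / (2 * c)) := htail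
    _ = G b ^ 2 / ω := by
        rw [show (2:ℝ) * c = ω from by rw [hc_def]; ring]
        ring
    _ ≤ (4 / η * (Real.exp (ω * η / 4))⁻¹) / ω := by gcongr
    _ = 4 / (η * ω) * Real.exp (-ω * η / 4) := by
        rw [hexpω]
        field_simp
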